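/- For every natural number m, the sum over q from 0 to m of C(2q,q)·C(2m-2q,m-q)·q/(q+1) (as rational numbers) equals 4^m - C(2m+1, m+1). -/

import Mathlib

open Finset

private noncomputable def cc (n : ℕ) : ℚ := ((2 * n).choose n : ℚ)

private lemma cc_rec (n : ℕ) : ((n : ℚ) + 1) * cc (n + 1) = (4 * n + 2) * cc n := by
  have h := Nat.succ_mul_centralBinom_succ n
  have h' : (((n + 1) * Nat.centralBinom (n + 1) : ℕ) : ℚ)
      = ((2 * (2 * n + 1) * Nat.centralBinom n : ℕ) : ℚ) := by exact_mod_cast h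
  unfold Nat.centralBinom at h'
  push_cast at h'
  unfold cc
  linarith [h']

private lemma sym (m : ℕ) (f : ℕ → ℕ → ℚ) :
    ∑ q ∈ range (m + 1), f q (m - q) = ∑ q ∈ range (m + 1), f (m - q) q := by
  rw [← Finset.sum_range_reflect (fun q => f (m - q) q) (m + 1)]
  refine Finset.sum_congr rfl fun q hq => ?_
  have hqm : q ≤ m := by simpa [Nat.lt_succ_iff] using hq
  have : m + 1 - 1 - q = m - q := by omega
  rw [this, Nat.sub_sub_self hqm]

private noncomputable def S (m : ℕ) : ℚ := ∑ q ∈ range (m + 1), cc q * cc (m - q)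

private lemma two_T (m : ℕ) :
    2 * (∑ q ∈ range (m + 1), (q : ℚ) * (cc q * cc (m - q))) = m * S m := by
  have hs := sym m (fun a b => (a : ℚ) * (cc a * cc b))
  have : (∑ q ∈ range (m + 1), (q : ℚ) * (cc q * cc (m - q)))
      + (∑ q ∈ range (m + 1), ((m - q : ℕ) : ℚ) * (cc (m - q) * cc q))
      = m * S m := by
    rw [← Finset.sum_add_distrib]
    unfold S
    rw [Finset.mul_sum]
    refine Finset.sum_congr rfl fun q hq => ?_
    have hqm : q ≤ m := by simpa [Nat.lt_succ_iff] using hq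
    have hc : ((m - q : ℕ) : ℚ) = (m : ℚ) - q := by
      push_cast [Nat.cast_sub hqm]; ring
    rw [hc]; ring
  rw [two_mul]
  nth_rewrite 2 [hs]
  exact this

private lemma S_succ (m : ℕ) : S (m + 1) = 4 * S m := by
  have h1 := two_T (m + 1)
  have h2 : (∑ q ∈ range (m + 2), (q : ℚ) * (cc q * cc (m + 1 - q)))
      = ∑ p ∈ range (m + 1), ((p : ℚ) + 1) * (cc (p + 1) * cc (m - p)) := by
    rw [Finset.sum_range_succ' (fun q => (q : ℚ) * (cc q * cc (m + 1 - q))) (m + 1)]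
    simp only [Nat.cast_zero, zero_mul, add_zero]
    refine Finset.sum_congr rfl fun p hp => ?_
    have : m + 1 - (p + 1) = m - p := by omega
    rw [this]; push_cast; ring
  have h3 : (∑ p ∈ range (m + 1), ((p : ℚ) + 1) * (cc (p + 1) * cc (m - p)))
      = ∑ p ∈ range (m + 1), (4 * (p : ℚ) + 2) * (cc p * cc (m - p)) := by
    refine Finset.sum_congr rfl fun p hp => ?_
    have := cc_rec p
    calc ((p : ℚ) + 1) * (cc (p + 1) * cc (m - p))
        = (((p : ℚ) + 1) * cc (p + 1)) * cc (m - p) := by ring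
      _ = ((4 * p + 2) * cc p) * cc (m - p) := by rw [this]
      _ = (4 * (p : ℚ) + 2) * (cc p * cc (m - p)) := by ring
  have h4 : (∑ p ∈ range (m + 1), (4 * (p : ℚ) + 2) * (cc p * cc (m - p)))
      = 4 * (∑ p ∈ range (m + 1), (p : ℚ) * (cc p * cc (m - p))) + 2 * S m := by
    unfold S
    rw [Finset.mul_sum, Finset.mul_sum, ← Finset.sum_add_distrib]
    exact Finset.sum_congr rfl fun p hp => by ring
  have h5 := two_T m
  have h6 : ((m : ℚ) + 1) * S (m + 1) = 4 * ((m : ℚ) + 1) * S m := by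
    have hS1 : S (m + 1) = ∑ q ∈ range (m + 2), cc q * cc (m + 1 - q) := rfl
    push_cast at h1
    nlinarith [h1, h2, h3, h4, h5]
  have hne : ((m : ℚ) + 1) ≠ 0 := by positivity
  field_simp at h6
  nlinarith [h6, hne]

private lemma S_eq (m : ℕ) : S m = 4 ^ m := by
  induction m with
  | zero => simp [S, cc]
  | succ n ih => rw [S_succ, ih]; ring

private lemma catalan_cast (n : ℕ) : (catalan n : ℚ) = cc n / ((n : ℚ) + 1) := by
  have h := succ_mul_catalan_eq_centralBinom n
  have h' : (((n + 1) * catalan n : ℕ) : ℚ) = ((Nat.centralBinom n : ℕ) : ℚ) := by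
    exact_mod_cast h
  unfold Nat.centralBinom at h'
  push_cast at h'
  have hne : ((n : ℚ) + 1) ≠ 0 := by positivity
  field_simp [cc]
  unfold cc
  linarith [h']

private lemma catalan_conv (m : ℕ) :
    ∑ q ∈ range (m + 1), (catalan q : ℚ) * (catalan (m - q) : ℚ) = (catalan (m + 1) : ℚ) := by
  have h := catalan_succ m
  have h2 : catalan (m + 1) = ∑ q ∈ range (m + 1), catalan q * catalan (m - q) := by
    rw [h, ← Finset.sum_range fun i => catalan i * catalan (m - i)]
  rw [h2]; push_cast; ring

private lemma B_eq (m : ℕ) :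
    ∑ q ∈ range (m + 1), cc q * cc (m - q) / ((q : ℚ) + 1)
      = ((2 * m + 1).choose (m + 1) : ℚ) := by
  set B := ∑ q ∈ range (m + 1), cc q * cc (m - q) / ((q : ℚ) + 1) with hB
  have hsym := sym m (fun a b => cc a * cc b / ((a : ℚ) + 1))
  have h2B : 2 * B = ((m : ℚ) + 2) * ∑ q ∈ range (m + 1),
      (catalan q : ℚ) * (catalan (m - q) : ℚ) := by
    rw [two_mul, hB]
    nth_rewrite 2 [hsym]
    rw [Finset.mul_sum, ← Finset.sum_add_distrib]
    refine Finset.sum_congr rfl fun q hq => ?_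
    have hqm : q ≤ m := by simpa [Nat.lt_succ_iff] using hq
    have hc : ((m - q : ℕ) : ℚ) = (m : ℚ) - q := by push_cast [Nat.cast_sub hqm]; ring
    rw [catalan_cast, catalan_cast, hc]
    have hq1 : ((q : ℚ) + 1) ≠ 0 := by positivity
    have hq2 : ((m : ℚ) - q + 1) ≠ 0 := by
      have : (q : ℚ) ≤ m := by exact_mod_cast hqm
      intro h; nlinarith
    field_simp
    ring
  rw [catalan_conv, catalan_cast] at h2B
  have hcent : cc (m + 1) = 2 * ((2 * m + 1).choose (m + 1) : ℚ) := by
    have h1 : (2 * (m + 1)).choose (m + 1) = (2 * m + 1).choose m + (2 * m + 1).choose (m + 1) := by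
      have : 2 * (m + 1) = (2 * m + 1) + 1 := by ring
      rw [this, Nat.choose_succ_succ']
    have h2 : (2 * m + 1).choose m = (2 * m + 1).choose (m + 1) := by
      have := Nat.choose_symm (by omega : m + 1 ≤ 2 * m + 1)
      have hms : 2 * m + 1 - (m + 1) = m := by omega
      rw [hms] at this
      exact this
    unfold cc
    rw [h1]
    push_cast
    rw [h2]
    ring
  have hne : ((m : ℚ) + 2) ≠ 0 := by positivity
  have h2B' : 2 * B = cc (m + 1) := by
    rw [h2B]
    push_cast
    have hne2 : ((m : ℚ) + 1 + 1) ≠ 0 := by positivity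
    field_simp
    ring
  rw [hcent] at h2B'
  linarith

theorem D_one_one (m : ℕ) :
    ∑ q ∈ Finset.range (m + 1),
      ((2 * q).choose q : ℚ) * ((2 * m - 2 * q).choose (m - q) : ℚ) * (q : ℚ) / ((q : ℚ) + 1)
    = 4 ^ m - ((2 * m + 1).choose (m + 1) : ℚ) := by
  have hmain : ∑ q ∈ Finset.range (m + 1),
      ((2 * q).choose q : ℚ) * ((2 * m - 2 * q).choose (m - q) : ℚ) * (q : ℚ) / ((q : ℚ) + 1)
      = S m - ∑ q ∈ range (m + 1), cc q * cc (m - q) / ((q : ℚ) + 1) := by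
    unfold S
    rw [← Finset.sum_sub_distrib]
    refine Finset.sum_congr rfl fun q hq => ?_
    have hqm : q ≤ m := by simpa [Nat.lt_succ_iff] using hq
    have h2 : 2 * m - 2 * q = 2 * (m - q) := by omega
    rw [h2]
    have hq1 : ((q : ℚ) + 1) ≠ 0 := by positivity
    unfold cc
    field_simp
    ring
  rw [hmain, S_eq, B_eq]
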